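/- Let Δ : 2^I → 2^I be a map satisfying N ⊆ ΔN for all N, and ΔM ⊆ ΔN whenever M ⊆ N. Define δN = ΔN \ N and define C_Δ : PPO_A^I → PPO_A by: a ≽ b iff there exists N ⊆ I such that a ≈_i b for all i ∈ N and a ≻_j b for all j ∈ δN. Then C_Δ(P_1,...,P_n) is a partial preorder for every profile (in particular, the defined relation is transitive), and C_Δ satisfies unanimity, neutrality, monotonicity, and independence of irrelevant alternatives. -/
import Mathlib


variable {A I : Type*}

/-- A partial preorder: a reflexive and transitive binary relation. -/
def IsPPO (P : A → A → Prop) : Prop := Reflexive P ∧ Transitive P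

/-- A linear (total) preorder: reflexive, transitive and complete. -/
def IsLPO (P : A → A → Prop) : Prop := Reflexive P ∧ Transitive P ∧ ∀ a b, P a b ∨ P b a

/-- A profile of partial preorders. -/
def IsPPOProfile (P : I → A → A → Prop) : Prop := ∀ i, IsPPO (P i)

/-- A profile of linear (total) preorders. -/
def IsLPOProfile (P : I → A → A → Prop) : Prop := ∀ i, IsLPO (P i)

/-- Strict preference. -/
def StrictPref (P : A → A → Prop) (a b : A) : Prop := P a b ∧ ¬ P b a

/-- Indifference. -/
def Indiff (P : A → A → Prop) (a b : A) : Prop := P a b ∧ P b a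

/-- The set `A` contains at least three distinct alternatives. -/
def ThreeAlts (A : Type*) : Prop := ∃ a b c : A, a ≠ b ∧ b ≠ c ∧ a ≠ c

/-- Unanimity. -/
def Unanimity (C : (I → A → A → Prop) → A → A → Prop) : Prop :=
  ∀ P, IsPPOProfile P → ∀ a b : A, (∀ i, P i a b) → C P a b

/-- Independence of irrelevant alternatives. -/
def IIA (C : (I → A → A → Prop) → A → A → Prop) : Prop :=
  ∀ P P' : I → A → A → Prop, IsPPOProfile P → IsPPOProfile P' → ∀ a b : A,
    {i | P i a b} = {i | P' i a b} → {i | P i b a} = {i | P' i b a} →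
    (C P a b ↔ C P' a b)

/-- Neutrality: `C (ρ*P) = ρ*(C P)` for every permutation `ρ` of the alternatives. -/
def Neutrality (C : (I → A → A → Prop) → A → A → Prop) : Prop :=
  ∀ (ρ : Equiv.Perm A) (P : I → A → A → Prop), IsPPOProfile P →
    ∀ x y : A, C (fun i a b => P i (ρ.symm a) (ρ.symm b)) x y ↔ C P (ρ.symm x) (ρ.symm y)

/-- Monotonicity. -/
def Monotonicity (C : (I → A → A → Prop) → A → A → Prop) : Prop :=
  ∀ P P' : I → A → A → Prop, IsPPOProfile P → IsPPOProfile P' → ∀ a b : A,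
    {i | P i a b} ⊆ {i | P' i a b} → {i | P' i b a} ⊆ {i | P i b a} →
    C P a b → C P' a b

/-- `J` is a decisive set: unanimous strict preference on `J` forces weak aggregate preference. -/
def Decisive (C : (I → A → A → Prop) → A → A → Prop) (J : Set I) : Prop :=
  ∀ P, IsPPOProfile P → ∀ a b : A, (∀ j ∈ J, StrictPref (P j) a b) → C P a b

/-- `J` is a strongly decisive set: unanimous weak preference on `J` forces weak aggregate preference. -/
def SDecisive (C : (I → A → A → Prop) → A → A → Prop) (J : Set I) : Prop :=
  ∀ P, IsPPOProfile P → ∀ a b : A, (∀ j ∈ J, P j a b) → C P a b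

/-- The voting system associated to a coalition structure `Δ : 2^I → 2^I`. -/
def CDelta (Δ : Set I → Set I) : (I → A → A → Prop) → A → A → Prop :=
  fun P a b => ∃ N : Set I, (∀ i ∈ N, Indiff (P i) a b) ∧
    ∀ j ∈ Δ N \ N, StrictPref (P j) a b

theorem CDelta_arrovian [Fintype I] (hA : ThreeAlts A) (Δ : Set I → Set I)
    (h1 : ∀ N : Set I, N ⊆ Δ N) (h2 : ∀ M N : Set I, M ⊆ N → Δ M ⊆ Δ N) :
    (∀ P : I → A → A → Prop, IsPPOProfile P → IsPPO (CDelta Δ P)) ∧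
    Unanimity (CDelta Δ (A := A)) ∧
    Neutrality (CDelta Δ (A := A)) ∧
    Monotonicity (CDelta Δ (A := A)) ∧
    IIA (CDelta Δ (A := A)) := by

  refine ⟨?_, ?_, ?_, ?_, ?_⟩
  · -- PPO
    intro P hP
    constructor
    · intro a
      refine ⟨Set.univ, fun i _ => ⟨(hP i).1 a, (hP i).1 a⟩, fun j hj => ?_⟩
      exact absurd (Set.mem_univ j) hj.2
    · rintro a b c ⟨N, hN, hdN⟩ ⟨M, hM, hdM⟩
      refine ⟨N ∩ M, ?_, ?_⟩
      · rintro i ⟨hiN, hiM⟩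
        exact ⟨(hP i).2 (hN i hiN).1 (hM i hiM).1, (hP i).2 (hM i hiM).2 (hN i hiN).2⟩
      · rintro j ⟨hj, hjn⟩
        have hjN : j ∈ Δ N := h2 _ _ Set.inter_subset_left hj
        have hjM : j ∈ Δ M := h2 _ _ Set.inter_subset_right hj
        by_cases hN' : j ∈ N <;> by_cases hM' : j ∈ M
        · exact absurd ⟨hN', hM'⟩ hjn
        · obtain ⟨h1', h2'⟩ := hN j hN'
          obtain ⟨h3', h4'⟩ := hdM j ⟨hjM, hM'⟩
          exact ⟨(hP j).2 h1' h3', fun hca => h4' ((hP j).2 hca h1')⟩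
        · obtain ⟨h1', h2'⟩ := hdN j ⟨hjN, hN'⟩
          obtain ⟨h3', h4'⟩ := hM j hM'
          exact ⟨(hP j).2 h1' h3', fun hca => h2' ((hP j).2 h3' hca)⟩
        · obtain ⟨h1', h2'⟩ := hdN j ⟨hjN, hN'⟩
          obtain ⟨h3', h4'⟩ := hdM j ⟨hjM, hM'⟩
          exact ⟨(hP j).2 h1' h3', fun hca => h2' ((hP j).2 h3' hca)⟩
  · -- Unanimity
    intro P hP a b hab
    refine ⟨{i | P i b a}, fun i hi => ⟨hab i, hi⟩, fun j hj => ⟨hab j, hj.2⟩⟩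
  · -- Neutrality
    intro ρ P hP x y
    exact Iff.rfl
  · -- Monotonicity
    rintro P P' hP hP' a b hsub hsub' ⟨N, hN, hdN⟩
    refine ⟨N ∩ {i | P' i b a}, ?_, ?_⟩
    · rintro i ⟨hiN, hi⟩
      exact ⟨hsub (hN i hiN).1, hi⟩
    · rintro j ⟨hj, hjn⟩
      have hjN : j ∈ Δ N := h2 _ _ Set.inter_subset_left hj
      by_cases hN' : j ∈ N
      · have hba : ¬ P' j b a := fun h => hjn ⟨hN', h⟩
        exact ⟨hsub (hN j hN').1, hba⟩
      · obtain ⟨h1', h2'⟩ := hdN j ⟨hjN, hN'⟩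
        exact ⟨hsub h1', fun h => h2' (hsub' h)⟩
  · -- IIA
    intro P P' hP hP' a b hab hba
    have e1 : ∀ i, P i a b ↔ P' i a b := fun i => Set.ext_iff.mp hab i
    have e2 : ∀ i, P i b a ↔ P' i b a := fun i => Set.ext_iff.mp hba i
    constructor
    · rintro ⟨N, hN, hdN⟩
      refine ⟨N, fun i hi => ⟨(e1 i).mp (hN i hi).1, (e2 i).mp (hN i hi).2⟩,
        fun j hj => ⟨(e1 j).mp (hdN j hj).1, fun h => (hdN j hj).2 ((e2 j).mpr h)⟩⟩
    · rintro ⟨N, hN, hdN⟩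
      refine ⟨N, fun i hi => ⟨(e1 i).mpr (hN i hi).1, (e2 i).mpr (hN i hi).2⟩,
        fun j hj => ⟨(e1 j).mpr (hdN j hj).1, fun h => (hdN j hj).2 ((e2 j).mp h)⟩⟩
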